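/- Let T be a triangulation of P_{n+2}. The vectors p_1,…,p_n form a ℤ-basis of the lattice M = {x ∈ ℤ^{n+1} : x_1+⋯+x_{n+1} = 0}, and likewise the vectors q_1,…,q_n form a ℤ-basis of M. -/

import Mathlib

/-- A triangulation of the convex `(n+2)`-gon with vertices `0, 1, …, n+1` labelled
counterclockwise, encoded as the finite set of its `2n+1` edges `(a,b)` with `a < b`. -/
def IsTriangulation (n : ℕ) (T : Finset (ℕ × ℕ)) : Prop :=
  (∀ e ∈ T, e.1 < e.2 ∧ e.2 ≤ n + 1) ∧
  (∀ i, i ≤ n → (i, i + 1) ∈ T) ∧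
  (0, n + 1) ∈ T ∧
  T.card = 2 * n + 1 ∧
  ∀ e ∈ T, ∀ f ∈ T, ¬(e.1 < f.1 ∧ f.1 < e.2 ∧ e.2 < f.2)

/-- `kL k < k < kR k` is the (unique) triangle of `T` with middle vertex `k`,
for each `k ∈ {1,…,n}`. -/
def MidTriangle (n : ℕ) (T : Finset (ℕ × ℕ)) (kL kR : ℕ → ℕ) : Prop :=
  ∀ k, 1 ≤ k → k ≤ n → kL k < k ∧ k < kR k ∧
    (kL k, k) ∈ T ∧ (k, kR k) ∈ T ∧ (kL k, kR k) ∈ T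

/-- The lattice `M = {x ∈ ℤ^{n+1} : x₁ + ⋯ + x_{n+1} = 0}`. -/
def Mlat (n : ℕ) : Submodule ℤ (Fin (n + 1) → ℤ) where
  carrier := {x | ∑ i, x i = 0}
  add_mem' := by
    intro a b ha hb
    simp only [Set.mem_setOf_eq, Pi.add_apply, Finset.sum_add_distrib] at *
    omega
  zero_mem' := by simp
  smul_mem' := by
    intro c x hx
    simp only [Set.mem_setOf_eq, Pi.smul_apply, smul_eq_mul, ← Finset.mul_sum] at *
    simp [hx]

/-- `stdE n i` is the standard basis vector `e_i` of `ℤ^{n+1}` (coordinates indexed `1,…,n+1`;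
the `Fin (n+1)` index `x` stands for coordinate `x+1`). -/
def stdE (n : ℕ) (i : ℕ) : Fin (n + 1) → ℤ := fun x => if (x : ℕ) + 1 = i then 1 else 0

/-- `p_k = e_{k_L + 1} − e_{k+1}`. -/
def pVec (n : ℕ) (kL : ℕ → ℕ) (k : ℕ) : Fin (n + 1) → ℤ :=
  stdE n (kL k + 1) - stdE n (k + 1)

/-- `q_k = −e_k + e_{k_R}`. -/
def qVec (n : ℕ) (kR : ℕ → ℕ) (k : ℕ) : Fin (n + 1) → ℤ :=
  -stdE n k + stdE n (kR k)

def ee (n m : ℕ) : Fin (n + 1) → ℤ := fun x => if (x : ℕ) = m then 1 else 0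

lemma mem_Mlat (n : ℕ) (x : Fin (n+1) → ℤ) : x ∈ Mlat n ↔ ∑ i, x i = 0 := Iff.rfl

lemma sum_ee (n m : ℕ) (hm : m ≤ n) : ∑ x : Fin (n+1), ee n m x = 1 := by
  have h : ∀ x : Fin (n+1), ee n m x = if x = (⟨m, by omega⟩ : Fin (n+1)) then 1 else 0 := by
    intro x
    simp [ee, Fin.ext_iff]
  simp_rw [h]
  simp

lemma diff_mem (n a b : ℕ) (ha : a ≤ n) (hb : b ≤ n) : ee n a - ee n b ∈ Mlat n := by
  rw [mem_Mlat]
  simp only [Pi.sub_apply, Finset.sum_sub_distrib]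
  rw [sum_ee n a ha, sum_ee n b hb]
  ring

lemma sum_smul_ee (n : ℕ) (x : Fin (n+1) → ℤ) :
    ∑ i : Fin (n+1), x i • ee n (i : ℕ) = x := by
  funext j
  simp only [Finset.sum_apply, Pi.smul_apply, ee, smul_eq_mul]
  have h : ∀ i : Fin (n+1), x i * (if (j : ℕ) = (i : ℕ) then (1:ℤ) else 0)
      = if i = j then x j else 0 := by
    intro i
    by_cases h : i = j
    · subst h; simp
    · have : ¬ ((j:ℕ) = (i:ℕ)) := fun hh => h (Fin.ext hh.symm)
      simp [h, this]
  rw [Finset.sum_congr rfl (fun i _ => h i)]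
  simp

lemma keyA_indep (n : ℕ) (a : Fin n → ℕ) (ha : ∀ k, a k ≤ (k : ℕ)) :
    LinearIndependent ℤ (fun k : Fin n => ee n (a k) - ee n ((k : ℕ) + 1)) := by
  rw [Fintype.linearIndependent_iff]
  intro g hg
  have key : ∀ m, ∀ k : Fin n, n ≤ (k : ℕ) + m → g k = 0 := by
    intro m
    induction m with
    | zero => intro k hk; exact absurd k.2 (by omega)
    | succ m ih =>
      intro k hk
      have h0 := congrFun hg ⟨(k : ℕ) + 1, by omega⟩
      simp only [Finset.sum_apply, Pi.smul_apply, Pi.sub_apply, Pi.zero_apply, smul_eq_mul,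
        ee] at h0
      have hterm : ∀ j : Fin n,
          g j * ((if ((k : ℕ) + 1) = a j then (1:ℤ) else 0)
            - (if ((k : ℕ) + 1) = (j : ℕ) + 1 then 1 else 0))
          = if j = k then -g k else 0 := by
        intro j
        by_cases hjk : j = k
        · subst hjk
          have h1 : ¬ ((j : ℕ) + 1 = a j) := by have := ha j; omega
          simp [h1]
        · have h2 : ¬ ((k : ℕ) + 1 = (j : ℕ) + 1) := by
            intro h; exact hjk (Fin.ext (by omega))
          by_cases h1 : (k : ℕ) + 1 = a j
          · have hgj : g j = 0 := ih j (by have := ha j; omega)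
            simp [h1, h2, hgj, hjk]
          · simp [h1, h2, hjk]; intro hh; exact absurd (Fin.ext hh.symm) hjk
      rw [Finset.sum_congr rfl (fun j _ => hterm j)] at h0
      simp at h0
      omega
  intro k
  exact key n k (by omega)

lemma keyA_span (n : ℕ) (a : Fin n → ℕ) (ha : ∀ k, a k ≤ (k : ℕ)) :
    Submodule.span ℤ (Set.range fun k : Fin n => ee n (a k) - ee n ((k : ℕ) + 1)) = Mlat n := by
  set v : Fin n → (Fin (n+1) → ℤ) := fun k => ee n (a k) - ee n ((k : ℕ) + 1) with hv
  apply le_antisymm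
  · rw [Submodule.span_le]
    rintro _ ⟨k, rfl⟩
    exact diff_mem n _ _ (by have := ha k; have := k.2; omega) (by have := k.2; omega)
  · intro x hx
    rw [mem_Mlat] at hx
    have hD : ∀ m, m ≤ n → ee n 0 - ee n m ∈ Submodule.span ℤ (Set.range v) := by
      intro m
      induction m using Nat.strong_induction_on with
      | _ m ih =>
        intro hm
        rcases Nat.eq_zero_or_pos m with h0 | h0
        · subst h0; simp
        · set k : Fin n := ⟨m - 1, by omega⟩ with hk
          have hvk : v k ∈ Submodule.span ℤ (Set.range v) :=
            Submodule.subset_span ⟨k, rfl⟩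
          have hkm : (k : ℕ) + 1 = m := by simp [hk]; omega
          have heq : ee n 0 - ee n m = (ee n 0 - ee n (a k)) + v k := by
            rw [hv]
            simp only [hkm]
            ring
          rw [heq]
          exact add_mem (ih (a k) (by have := ha k; omega) (by have := ha k; have := k.2; omega))
            hvk
    have h2 : x = ∑ i : Fin (n+1), x i • (ee n (i : ℕ) - ee n 0) := by
      have : ∑ i : Fin (n+1), x i • (ee n (i : ℕ) - ee n 0)
          = (∑ i : Fin (n+1), x i • ee n (i : ℕ)) - (∑ i : Fin (n+1), x i) • ee n 0 := by
        rw [Finset.sum_smul]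
        rw [← Finset.sum_sub_distrib]
        exact Finset.sum_congr rfl (fun i _ => smul_sub _ _ _)
      rw [this, sum_smul_ee, hx]
      simp
    rw [h2]
    apply Submodule.sum_mem
    intro i _
    rw [show ee n (i : ℕ) - ee n 0 = -(ee n 0 - ee n (i : ℕ)) by ring]
    exact Submodule.smul_mem _ _ (neg_mem (hD i (by omega)))

lemma keyB_indep (n : ℕ) (b : Fin n → ℕ) (hb : ∀ k : Fin n, (k : ℕ) < b k) :
    LinearIndependent ℤ (fun k : Fin n => ee n (b k) - ee n (k : ℕ)) := by
  rw [Fintype.linearIndependent_iff]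
  intro g hg
  have key : ∀ m, ∀ k : Fin n, (k : ℕ) < m → g k = 0 := by
    intro m
    induction m with
    | zero => intro k hk; omega
    | succ m ih =>
      intro k hk
      rcases Nat.lt_succ_iff_lt_or_eq.mp hk with h | h
      · exact ih k h
      · have h0 := congrFun hg ⟨(k : ℕ), by omega⟩
        simp only [Finset.sum_apply, Pi.smul_apply, Pi.sub_apply, Pi.zero_apply, smul_eq_mul,
          ee] at h0
        have hterm : ∀ j : Fin n,
            g j * ((if ((k : ℕ)) = b j then (1:ℤ) else 0)
              - (if ((k : ℕ)) = (j : ℕ) then 1 else 0))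
            = if j = k then -g k else 0 := by
          intro j
          by_cases hjk : j = k
          · subst hjk
            have h1 : ¬ ((j : ℕ) = b j) := by have := hb j; omega
            simp [h1]
          · have h2 : ¬ ((k : ℕ) = (j : ℕ)) := by
              intro hh; exact hjk (Fin.ext hh.symm)
            by_cases h1 : (k : ℕ) = b j
            · have hgj : g j = 0 := ih j (by have := hb j; omega)
              simp [h1, h2, hgj, hjk]
            · simp [h1, h2, hjk]
        rw [Finset.sum_congr rfl (fun j _ => hterm j)] at h0
        simp at h0
        omega
  intro k
  exact key n k k.2

lemma keyB_span (n : ℕ) (b : Fin n → ℕ) (hb : ∀ k : Fin n, (k : ℕ) < b k ∧ b k ≤ n) :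
    Submodule.span ℤ (Set.range fun k : Fin n => ee n (b k) - ee n (k : ℕ)) = Mlat n := by
  set v : Fin n → (Fin (n+1) → ℤ) := fun k => ee n (b k) - ee n (k : ℕ) with hv
  apply le_antisymm
  · rw [Submodule.span_le]
    rintro _ ⟨k, rfl⟩
    exact diff_mem n _ _ (hb k).2 (by have := k.2; omega)
  · intro x hx
    rw [mem_Mlat] at hx
    have hD : ∀ d, ∀ m, m ≤ n → n ≤ m + d →
        ee n n - ee n m ∈ Submodule.span ℤ (Set.range v) := by
      intro d
      induction d with
      | zero =>
        intro m hm hm2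
        have : m = n := by omega
        subst this
        simp
      | succ d ih =>
        intro m hm hm2
        rcases Nat.lt_or_ge m n with h0 | h0
        · have hvk : v ⟨m, h0⟩ ∈ Submodule.span ℤ (Set.range v) :=
            Submodule.subset_span ⟨⟨m, h0⟩, rfl⟩
          have heq : ee n n - ee n m = (ee n n - ee n (b ⟨m, h0⟩)) + v ⟨m, h0⟩ := by
            rw [hv]; ring
          rw [heq]
          have hb1 := (hb ⟨m, h0⟩).1
          exact add_mem (ih (b ⟨m, h0⟩) (hb ⟨m, h0⟩).2 (by simp at hb1; omega)) hvk
        · have : m = n := by omega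
          subst this
          simp
    have h2 : x = ∑ i : Fin (n+1), x i • (ee n (i : ℕ) - ee n n) := by
      have : ∑ i : Fin (n+1), x i • (ee n (i : ℕ) - ee n n)
          = (∑ i : Fin (n+1), x i • ee n (i : ℕ)) - (∑ i : Fin (n+1), x i) • ee n n := by
        rw [Finset.sum_smul]
        rw [← Finset.sum_sub_distrib]
        exact Finset.sum_congr rfl (fun i _ => smul_sub _ _ _)
      rw [this, sum_smul_ee, hx]
      simp
    rw [h2]
    apply Submodule.sum_mem
    intro i _
    rw [show ee n (i : ℕ) - ee n n = -(ee n n - ee n (i : ℕ)) by ring]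
    exact Submodule.smul_mem _ _ (neg_mem (hD n i (by omega) (by omega)))

lemma stdE_succ (n t : ℕ) : stdE n (t + 1) = ee n t := by
  funext x
  simp [stdE, ee]

lemma stdE_eq (n t : ℕ) (ht : 1 ≤ t) : stdE n t = ee n (t - 1) := by
  funext x
  have : ((x : ℕ) + 1 = t) = ((x : ℕ) = t - 1) := by
    apply propext; omega
  simp [stdE, ee, this]

lemma pVec_eq (n : ℕ) (kL : ℕ → ℕ) (k : ℕ) :
    pVec n kL k = ee n (kL k) - ee n k := by
  rw [pVec, stdE_succ, stdE_succ]

lemma qVec_eq (n : ℕ) (kR : ℕ → ℕ) (k : ℕ) (hk : 1 ≤ k) (hkr : 1 ≤ kR k) :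
    qVec n kR k = ee n (kR k - 1) - ee n (k - 1) := by
  rw [qVec, stdE_eq n k hk, stdE_eq n (kR k) hkr]
  ring

/-- The vectors `p_1,…,p_n` form a ℤ-basis of `M`, and likewise `q_1,…,q_n` form a
ℤ-basis of `M`. -/
theorem stmt2 (n : ℕ) (hn : 1 ≤ n) (T : Finset (ℕ × ℕ)) (hT : IsTriangulation n T)
    (kL kR : ℕ → ℕ) (hmid : MidTriangle n T kL kR) :
    ((∀ k, 1 ≤ k → k ≤ n → pVec n kL k ∈ Mlat n) ∧
      LinearIndependent ℤ (fun k : Fin n => pVec n kL ((k : ℕ) + 1)) ∧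
      Submodule.span ℤ (Set.range fun k : Fin n => pVec n kL ((k : ℕ) + 1)) = Mlat n) ∧
    ((∀ k, 1 ≤ k → k ≤ n → qVec n kR k ∈ Mlat n) ∧
      LinearIndependent ℤ (fun k : Fin n => qVec n kR ((k : ℕ) + 1)) ∧
      Submodule.span ℤ (Set.range fun k : Fin n => qVec n kR ((k : ℕ) + 1)) = Mlat n) := by
  -- basic facts from the triangulation
  have hL : ∀ k, 1 ≤ k → k ≤ n → kL k < k := fun k h1 h2 => (hmid k h1 h2).1
  have hR : ∀ k, 1 ≤ k → k ≤ n → k < kR k ∧ kR k ≤ n + 1 := by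
    intro k h1 h2
    refine ⟨(hmid k h1 h2).2.1, ?_⟩
    exact (hT.1 _ (hmid k h1 h2).2.2.2.1).2
  -- the descending family for p
  have hpfun : (fun k : Fin n => pVec n kL ((k : ℕ) + 1))
      = fun k : Fin n => ee n (kL ((k : ℕ) + 1)) - ee n ((k : ℕ) + 1) := by
    funext k
    exact pVec_eq n kL ((k : ℕ) + 1)
  have hpa : ∀ k : Fin n, kL ((k : ℕ) + 1) ≤ (k : ℕ) := by
    intro k
    have := hL ((k : ℕ) + 1) (by omega) (by have := k.2; omega)
    omega
  -- the ascending family for q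
  have hqfun : (fun k : Fin n => qVec n kR ((k : ℕ) + 1))
      = fun k : Fin n => ee n (kR ((k : ℕ) + 1) - 1) - ee n (k : ℕ) := by
    funext k
    have h := hR ((k : ℕ) + 1) (by omega) (by have := k.2; omega)
    rw [qVec_eq n kR ((k : ℕ) + 1) (by omega) (by omega)]
    simp
  have hqb : ∀ k : Fin n, (k : ℕ) < kR ((k : ℕ) + 1) - 1 ∧ kR ((k : ℕ) + 1) - 1 ≤ n := by
    intro k
    have h := hR ((k : ℕ) + 1) (by omega) (by have := k.2; omega)
    omega
  refine ⟨⟨?_, ?_, ?_⟩, ⟨?_, ?_, ?_⟩⟩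
  · intro k h1 h2
    rw [pVec_eq]
    exact diff_mem n _ _ (by have := hL k h1 h2; omega) (by omega)
  · rw [hpfun]; exact keyA_indep n _ hpa
  · rw [hpfun]; exact keyA_span n _ hpa
  · intro k h1 h2
    have h := hR k h1 h2
    rw [qVec_eq n kR k h1 (by omega)]
    exact diff_mem n _ _ (by omega) (by omega)
  · rw [hqfun]; exact keyB_indep n _ (fun k => (hqb k).1)
  · rw [hqfun]; exact keyB_span n _ hqb
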